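/- Let H be a Borel measure on [0,∞) with H([0,1]) = 0 and suppose ∫₀^1 r² (∫_{(1,∞)} (v−1) r^{−v} H(dv)) dr < ∞. Then H([3,∞)) = 0. -/

import Mathlib

open MeasureTheory
set_option maxHeartbeats 1000000

lemma aux_div_top : ∫⁻ r in Set.Ioo (0:ℝ) 1, ENNReal.ofReal (2 / r) = ⊤ := by
  by_contra h
  have hm : AEStronglyMeasurable (fun r : ℝ => 2 / r) (volume.restrict (Set.Ioo 0 1)) := by
    fun_prop
  have hint : IntegrableOn (fun r : ℝ => 2 / r) (Set.Ioo 0 1) := by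
    refine ⟨hm, ?_⟩
    rw [hasFiniteIntegral_iff_ofReal ?_]
    · exact lt_top_iff_ne_top.2 h
    · filter_upwards [ae_restrict_mem measurableSet_Ioo] with r hr
      have := hr.1; positivity
  have : IntegrableOn (fun x : ℝ => x ^ (-1:ℝ)) (Set.Ioo 0 1) := by
    refine IntegrableOn.congr_fun (hint.const_mul (2⁻¹)) (fun x hx => ?_) measurableSet_Ioo
    rw [Real.rpow_neg_one]; field_simp
  rw [intervalIntegral.integrableOn_Ioo_rpow_iff zero_lt_one] at this
  norm_num at this

theorem stmt_17 (H : Measure ℝ) (hH0 : H (Set.Iio 0) = 0) (hH1 : H (Set.Icc 0 1) = 0)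
    (hfin : ∫⁻ r in Set.Ioo (0 : ℝ) 1,
        ENNReal.ofReal (r ^ 2) *
          ∫⁻ v in Set.Ioi (1 : ℝ), ENNReal.ofReal ((v - 1) * r ^ (-v)) ∂H < ⊤) :
    H (Set.Ici (3 : ℝ)) = 0 := by
  by_contra hm0
  set m := H (Set.Ici (3:ℝ)) with hm
  have key : ∀ r ∈ Set.Ioo (0:ℝ) 1,
      ENNReal.ofReal (2 / r) * m ≤ ENNReal.ofReal (r ^ 2) *
        ∫⁻ v in Set.Ioi (1 : ℝ), ENNReal.ofReal ((v - 1) * r ^ (-v)) ∂H := by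
    intro r hr
    have hr0 := hr.1
    have hinner : ENNReal.ofReal (2 * r ^ (-3:ℝ)) * m ≤
        ∫⁻ v in Set.Ioi (1 : ℝ), ENNReal.ofReal ((v - 1) * r ^ (-v)) ∂H := by
      have h1 : ∫⁻ v in Set.Ici (3:ℝ), ENNReal.ofReal ((v - 1) * r ^ (-v)) ∂H ≤
          ∫⁻ v in Set.Ioi (1:ℝ), ENNReal.ofReal ((v - 1) * r ^ (-v)) ∂H :=
        lintegral_mono_set (fun x hx => lt_of_lt_of_le (by norm_num : (1:ℝ) < 3) hx)
      have h2 : ENNReal.ofReal (2 * r ^ (-3:ℝ)) * m ≤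
          ∫⁻ v in Set.Ici (3:ℝ), ENNReal.ofReal ((v - 1) * r ^ (-v)) ∂H := by
        rw [hm, ← setLIntegral_const]
        refine setLIntegral_mono' measurableSet_Ici fun v hv => ?_
        apply ENNReal.ofReal_le_ofReal
        have hv3 : (3:ℝ) ≤ v := hv
        have hrp : r ^ (-3:ℝ) ≤ r ^ (-v) :=
          Real.rpow_le_rpow_of_exponent_ge hr0 hr.2.le (by linarith)
        exact mul_le_mul (by linarith) hrp (Real.rpow_pos_of_pos hr0 _).le (by linarith)
      exact h2.trans h1
    calc ENNReal.ofReal (2/r) * m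
        = ENNReal.ofReal (r^2) * (ENNReal.ofReal (2 * r^(-3:ℝ)) * m) := by
          rw [← mul_assoc, ← ENNReal.ofReal_mul (by positivity)]
          congr 2
          rw [show (-3:ℝ) = -((3:ℕ):ℝ) by norm_num, Real.rpow_neg hr0.le, Real.rpow_natCast]
          field_simp
      _ ≤ _ := mul_le_mul_right hinner _
  have big : (∫⁻ r in Set.Ioo (0:ℝ) 1, ENNReal.ofReal (2/r) * m) ≤
      ∫⁻ r in Set.Ioo (0 : ℝ) 1, ENNReal.ofReal (r ^ 2) *
        ∫⁻ v in Set.Ioi (1 : ℝ), ENNReal.ofReal ((v - 1) * r ^ (-v)) ∂H :=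
    setLIntegral_mono' measurableSet_Ioo key
  rw [lintegral_mul_const _ (by fun_prop),
    aux_div_top, ENNReal.top_mul hm0] at big
  exact absurd hfin (not_lt.2 big)
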